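/- Collections of B_1-paths on the triangular grid are strong 3-Helly: for every finite family F of at least three paths on the triangular grid, each with at most one bend, there exist three members P, Q, R of F such that E(P) ∩ E(Q) ∩ E(R) equals the intersection of the edge sets E(S) over all members S of F. -/

import Mathlib

/-- The triangular grid: the simple graph on `ℤ × ℤ` where two points are adjacent
iff their difference is `±(1,0)`, `±(0,1)` or `±(1,1)`. -/
def TGrid : SimpleGraph (ℤ × ℤ) where
  Adj u v :=
    (v.1 - u.1 = 1 ∧ v.2 - u.2 = 0) ∨ (v.1 - u.1 = -1 ∧ v.2 - u.2 = 0) ∨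
    (v.1 - u.1 = 0 ∧ v.2 - u.2 = 1) ∨ (v.1 - u.1 = 0 ∧ v.2 - u.2 = -1) ∨
    (v.1 - u.1 = 1 ∧ v.2 - u.2 = 1) ∨ (v.1 - u.1 = -1 ∧ v.2 - u.2 = -1)
  symm := ⟨by intro u v h; omega⟩
  loopless := ⟨by intro u h; omega⟩

/-- The (symmetric) direction datum of a grid edge: the pair of absolute coordinate
differences.  For grid edges this is `(1,0)` (horizontal), `(0,1)` (vertical) or
`(1,1)` (diagonal). -/
def edir (e : Sym2 (ℤ × ℤ)) : ℤ × ℤ :=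
  Sym2.lift ⟨fun u v => (|u.1 - v.1|, |u.2 - v.2|), by
    intro u v; simp [abs_sub_comm]⟩ e

/-- The `t`-th edge of a walk. -/
def wEdge {u v : ℤ × ℤ} (p : TGrid.Walk u v) (t : ℕ) : Sym2 (ℤ × ℤ) :=
  s(p.getVert t, p.getVert (t + 1))

/-- The number of bends of a walk: the number of consecutive pairs of edges with
different directions. -/
def bendCount {u v : ℤ × ℤ} (p : TGrid.Walk u v) : ℕ :=
  (List.range (p.length - 1)).countP
    (fun i => decide (edir (wEdge p i) ≠ edir (wEdge p (i + 1))))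

/-- `b` is a bend point of the walk `p`. -/
def IsBendAt {u v : ℤ × ℤ} (p : TGrid.Walk u v) (b : ℤ × ℤ) : Prop :=
  ∃ i : ℕ, i + 2 ≤ p.length ∧ p.getVert (i + 1) = b ∧
    edir (wEdge p i) ≠ edir (wEdge p (i + 1))

/-- A (nontrivial simple) path on the triangular grid. -/
structure TPath where
  src : ℤ × ℤ
  dst : ℤ × ℤ
  walk : TGrid.Walk src dst
  isPath : walk.IsPath
  nontriv : 0 < walk.length

/-- The set of grid edges of a path. -/
def pEdges (P : TPath) : Set (Sym2 (ℤ × ℤ)) := {e | e ∈ P.walk.edges}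

/-- The set of grid points of a path. -/
def pPts (P : TPath) : Set (ℤ × ℤ) := {q | q ∈ P.walk.support}

/-- A segment of a path: a maximal straight (bend-free) subpath, recorded by the
interval of edge indices `[i, j)` it occupies. -/
structure Segment (P : TPath) where
  i : ℕ
  j : ℕ
  lt : i < j
  le : j ≤ P.walk.length
  straight : ∀ t, i ≤ t → t < j → edir (wEdge P.walk t) = edir (wEdge P.walk i)
  maxLeft : i = 0 ∨ edir (wEdge P.walk (i - 1)) ≠ edir (wEdge P.walk i)
  maxRight : j = P.walk.length ∨ edir (wEdge P.walk (j - 1)) ≠ edir (wEdge P.walk j)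

/-- The set of grid edges of a segment. -/
def Segment.edges {P : TPath} (s : Segment P) : Set (Sym2 (ℤ × ℤ)) :=
  {e | ∃ t, s.i ≤ t ∧ t < s.j ∧ e = wEdge P.walk t}

/-- The set of grid points of a segment. -/
def Segment.pts {P : TPath} (s : Segment P) : Set (ℤ × ℤ) :=
  {q | ∃ t, s.i ≤ t ∧ t ≤ s.j ∧ q = P.walk.getVert t}

/-- The direction of a segment. -/
def Segment.dir {P : TPath} (s : Segment P) : ℤ × ℤ := edir (wEdge P.walk s.i)

/-- The three directions of the triangular grid. -/
inductive Dir | H | V | D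
deriving DecidableEq

/-- The direction of the (straight) line from `a` to `b`. -/
def dirOf (a b : ℤ × ℤ) : Dir :=
  if a.2 = b.2 then .H else if a.1 = b.1 then .V else .D

/-- A grid line of the triangular grid: a full horizontal, vertical or diagonal line. -/
structure GridLine where
  dir : Dir
  c : ℤ

/-- The parametrization of the points of a grid line. -/
def GridLine.pt (l : GridLine) (t : ℤ) : ℤ × ℤ :=
  match l.dir with
  | .H => (t, l.c)
  | .V => (l.c, t)
  | .D => (l.c + t, t)

/-- The `t`-th edge of a grid line. -/
def GridLine.edge (l : GridLine) (t : ℤ) : Sym2 (ℤ × ℤ) := s(l.pt t, l.pt (t + 1))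

/-- The set of grid points of a grid line. -/
def GridLine.pts (l : GridLine) : Set (ℤ × ℤ) := Set.range l.pt

/-- The set of grid edges of a grid line. -/
def GridLine.edges (l : GridLine) : Set (Sym2 (ℤ × ℤ)) := Set.range l.edge

/-- A right triangle of the triangular grid, given by a base corner `p`, a leg
length `k ≥ 1`, and one of the two possible orientations. -/
structure RightTri where
  p : ℤ × ℤ
  k : ℤ
  hk : 1 ≤ k
  orientA : Bool

/-- The set of grid edges of a right triangle. -/
def RightTri.edges (T : RightTri) : Set (Sym2 (ℤ × ℤ)) :=
  if T.orientA then
    {e | ∃ t : ℤ, 0 ≤ t ∧ t < T.k ∧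
      (e = s((T.p.1 + t, T.p.2), (T.p.1 + t + 1, T.p.2)) ∨
       e = s((T.p.1 + T.k, T.p.2 + t), (T.p.1 + T.k, T.p.2 + t + 1)) ∨
       e = s((T.p.1 + t, T.p.2 + t), (T.p.1 + t + 1, T.p.2 + t + 1)))}
  else
    {e | ∃ t : ℤ, 0 ≤ t ∧ t < T.k ∧
      (e = s((T.p.1, T.p.2 + t), (T.p.1, T.p.2 + t + 1)) ∨
       e = s((T.p.1 + t, T.p.2 + T.k), (T.p.1 + t + 1, T.p.2 + T.k)) ∨
       e = s((T.p.1 + t, T.p.2 + t), (T.p.1 + t + 1, T.p.2 + t + 1)))}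

/-- The three corners of a right triangle. -/
def RightTri.corners (T : RightTri) : Set (ℤ × ℤ) :=
  if T.orientA then {T.p, (T.p.1 + T.k, T.p.2), (T.p.1 + T.k, T.p.2 + T.k)}
  else {T.p, (T.p.1, T.p.2 + T.k), (T.p.1 + T.k, T.p.2 + T.k)}

/-- `U(𝒫)`: the subgraph of the grid formed by all segments of members of the family
that share at least one grid edge with another member, given by its set of edges. -/
def UEdges {ι : Type} (P : ι → TPath) : Set (Sym2 (ℤ × ℤ)) :=
  {e | ∃ i : ι, ∃ s : Segment (P i), e ∈ s.edges ∧
        ∃ j : ι, j ≠ i ∧ (s.edges ∩ pEdges (P j)).Nonempty}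

/-- A B₁-EPGₜ representation of a simple graph `G`: a family of at most-one-bend
paths on the triangular grid whose edge-intersection graph is `G`. -/
def IsB1EPGtRep {V : Type} (G : SimpleGraph V) (Rep : V → TPath) : Prop :=
  (∀ v, bendCount (Rep v).walk ≤ 1) ∧
  ∀ u v : V, u ≠ v → (G.Adj u v ↔ (pEdges (Rep u) ∩ pEdges (Rep v)).Nonempty)


abbrev V2 := ℤ × ℤ

def isDir (d : V2) : Prop :=
  d = (1,0) ∨ d = (-1,0) ∨ d = (0,1) ∨ d = (0,-1) ∨ d = (1,1) ∨ d = (-1,-1)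

def ad (d : V2) : V2 := (|d.1|, |d.2|)

def mv (q d : V2) (t : ℤ) : V2 := (q.1 + t * d.1, q.2 + t * d.2)

def seg (q d : V2) (t : ℤ) : Sym2 V2 := s(mv q d t, mv q d (t+1))

def lineE (q d : V2) : Set (Sym2 V2) := {x | ∃ s : ℤ, x = seg q d s}

def segs (q d : V2) (a b : ℤ) : Set (Sym2 V2) := {x | ∃ s : ℤ, a ≤ s ∧ s < b ∧ x = seg q d s}

def Rset (q d : V2) (n : ℕ) : Set (Sym2 V2) := {x | ∃ t : ℕ, t < n ∧ x = seg q d t}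

lemma mv_mv (q d : V2) (s t : ℤ) : mv (mv q d s) d t = mv q d (s + t) := by
  simp only [mv, Prod.mk.injEq]; constructor <;> ring

lemma mv_zero (q d : V2) : mv q d 0 = q := by simp [mv]

lemma ad_neg (d : V2) : ad (-d.1, -d.2) = ad d := by simp [ad]

lemma seg_eq_cases {d d' : V2} (hd : isDir d) (hd' : isDir d') {q q' : V2} {t t' : ℤ}
    (h : seg q d t = seg q' d' t') :
    (d' = d ∧ q' = mv q d (t - t')) ∨ (d' = (-d.1, -d.2) ∧ q' = mv q d (t + t' + 1)) := by
  rw [seg, seg, Sym2.eq_iff] at h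
  rcases d with ⟨d1, d2⟩; rcases d' with ⟨f1, f2⟩
  rcases q with ⟨q1, q2⟩; rcases q' with ⟨p1, p2⟩
  rcases h with ⟨h1, h2⟩ | ⟨h1, h2⟩ <;>
    simp only [mv, Prod.mk.injEq] at h1 h2 ⊢
  · obtain ⟨a1, a2⟩ := h1; obtain ⟨a3, a4⟩ := h2
    left
    have hf1 : f1 = d1 := by linarith
    have hf2 : f2 = d2 := by linarith
    subst hf1; subst hf2
    refine ⟨⟨rfl, rfl⟩, by linear_combination -a1, by linear_combination -a2⟩
  · obtain ⟨a1, a2⟩ := h1; obtain ⟨a3, a4⟩ := h2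
    right
    have hf1 : f1 = -d1 := by linarith
    have hf2 : f2 = -d2 := by linarith
    subst hf1; subst hf2
    refine ⟨⟨rfl, rfl⟩, by linear_combination -a1, by linear_combination -a2⟩

lemma isDir_ne_zero {d : V2} (hd : isDir d) : d.1 ≠ 0 ∨ d.2 ≠ 0 := by
  rcases hd with h|h|h|h|h|h <;> subst h <;> simp

lemma isDir_ne_neg {d : V2} (hd : isDir d) : d ≠ (-d.1, -d.2) := by
  rcases hd with h|h|h|h|h|h <;> subst h <;> decide

lemma seg_inj {d : V2} (hd : isDir d) {q : V2} {s s' : ℤ} (h : seg q d s = seg q d s') :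
    s = s' := by
  rcases seg_eq_cases hd hd h with ⟨-, h2⟩ | ⟨h1, -⟩
  · have e1 := congrArg Prod.fst h2
    have e2 := congrArg Prod.snd h2
    simp only [mv] at e1 e2
    have e1' : (s - s') * d.1 = 0 := by linarith
    have e2' : (s - s') * d.2 = 0 := by linarith
    rcases mul_eq_zero.mp e1' with h | h
    · omega
    · rcases mul_eq_zero.mp e2' with h' | h'
      · omega
      · rcases isDir_ne_zero hd with hz | hz <;> [exact absurd h hz; exact absurd h' hz]
  · exact absurd h1 (isDir_ne_neg hd)

lemma mem_segs_iff {d : V2} (hd : isDir d) {q : V2} {a b s : ℤ} :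
    seg q d s ∈ segs q d a b ↔ a ≤ s ∧ s < b := by
  constructor
  · rintro ⟨s', h1, h2, h3⟩
    have := seg_inj hd h3.symm; omega
  · intro h; exact ⟨s, h.1, h.2, rfl⟩

lemma segs_empty {q d : V2} {a b : ℤ} (h : b ≤ a) : segs q d a b = ∅ := by
  ext x; simp only [segs, Set.mem_setOf_eq, Set.mem_empty_iff_false, iff_false]
  rintro ⟨s, h1, h2, -⟩; omega

lemma segs_subset {q d : V2} {a b a' b' : ℤ} (h1 : a' ≤ a) (h2 : b ≤ b') :
    segs q d a b ⊆ segs q d a' b' := by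
  rintro x ⟨s, hs1, hs2, rfl⟩; exact ⟨s, by omega, by omega, rfl⟩

lemma segs_inter {d : V2} (hd : isDir d) (q : V2) (a b a' b' : ℤ) :
    segs q d a b ∩ segs q d a' b' = segs q d (max a a') (min b b') := by
  ext x
  constructor
  · rintro ⟨⟨s, h1, h2, rfl⟩, ⟨s', h1', h2', hx⟩⟩
    have := seg_inj hd hx
    exact ⟨s, by omega, by omega, rfl⟩
  · rintro ⟨s, h1, h2, rfl⟩
    exact ⟨⟨s, by omega, by omega, rfl⟩, ⟨s, by omega, by omega, rfl⟩⟩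

lemma segs_subset_lineE (q d : V2) (a b : ℤ) : segs q d a b ⊆ lineE q d := by
  rintro x ⟨s, -, -, rfl⟩; exact ⟨s, rfl⟩

lemma Rset_subset_lineE (q d : V2) (n : ℕ) : Rset q d n ⊆ lineE q d := by
  rintro x ⟨t, -, rfl⟩; exact ⟨t, rfl⟩

lemma Rset_eq_segs (q d : V2) (n : ℕ) : Rset q d n = segs q d 0 n := by
  ext x
  constructor
  · rintro ⟨t, ht, rfl⟩; exact ⟨t, by omega, by exact_mod_cast ht, rfl⟩
  · rintro ⟨s, h1, h2, rfl⟩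
    refine ⟨s.toNat, ?_, ?_⟩
    · omega
    · congr 1; omega

lemma lineE_disj {d d' : V2} (hd : isDir d) (hd' : isDir d') (hne : ad d ≠ ad d')
    (q q' : V2) : lineE q d ∩ lineE q' d' = ∅ := by
  ext x; simp only [Set.mem_inter_iff, Set.mem_empty_iff_false, iff_false, not_and]
  rintro ⟨s, rfl⟩ ⟨s', hx⟩
  rcases seg_eq_cases hd hd' hx with ⟨h1, -⟩ | ⟨h1, -⟩
  · exact hne (by rw [h1])
  · exact hne (by rw [h1, ad_neg])

lemma seg_rebase (q d : V2) (k s : ℤ) : seg (mv q d k) d s = seg q d (k + s) := by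
  rw [seg, seg, mv_mv, mv_mv]; ring_nf

lemma seg_rebase_neg (q d : V2) (k s : ℤ) :
    seg (mv q d k) (-d.1, -d.2) s = seg q d (k - s - 1) := by
  rw [seg, seg, Sym2.eq_iff]
  right
  constructor
  · show mv (mv q d k) (-d.1,-d.2) s = mv q d (k - s - 1 + 1)
    simp [mv]; constructor <;> ring
  · show mv (mv q d k) (-d.1,-d.2) (s+1) = mv q d (k - s - 1)
    simp [mv]; constructor <;> ring

lemma segs_rebase (q d : V2) (k a b : ℤ) :
    segs (mv q d k) d a b = segs q d (k + a) (k + b) := by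
  ext x
  constructor
  · rintro ⟨s, h1, h2, rfl⟩; exact ⟨k + s, by omega, by omega, (seg_rebase q d k s).symm ▸ rfl⟩
  · rintro ⟨s, h1, h2, rfl⟩
    exact ⟨s - k, by omega, by omega, by rw [seg_rebase]; congr 1; ring⟩

lemma segs_rebase_neg (q d : V2) (k a b : ℤ) :
    segs (mv q d k) (-d.1, -d.2) a b = segs q d (k - b) (k - a) := by
  ext x
  constructor
  · rintro ⟨s, h1, h2, rfl⟩
    exact ⟨k - s - 1, by omega, by omega, by rw [seg_rebase_neg]⟩
  · rintro ⟨s, h1, h2, rfl⟩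
    exact ⟨k - s - 1, by omega, by omega, by rw [seg_rebase_neg]; congr 1; omega⟩

lemma lemmaD {d e : V2} (hd : isDir d) (he : isDir e) (hne : ad d ≠ ad e)
    {k k' : ℤ} (h1 : k * d.1 = k' * e.1) (h2 : k * d.2 = k' * e.2) : k = 0 ∧ k' = 0 := by
  rcases hd with h|h|h|h|h|h <;> subst h <;>
    rcases he with h|h|h|h|h|h <;> subst h <;>
    first
      | (exfalso; exact hne (by decide))
      | (simp only [] at h1 h2; omega)

lemma ad_cases {d d' : V2} (hd : isDir d) (hd' : isDir d') (h : ad d = ad d') :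
    d' = d ∨ d' = (-d.1, -d.2) := by
  rcases hd with h1|h1|h1|h1|h1|h1 <;> subst h1 <;>
    rcases hd' with h2|h2|h2|h2|h2|h2 <;> subst h2 <;>
    simp_all [ad] <;> first | (left; rfl) | (right; rfl) | (exfalso; revert h; decide)

lemma ad_eq_of_on_line {dl d : V2} (hdl : isDir dl) (hd : isDir d) {r q : V2} {n : ℕ}
    {x : Sym2 V2} (h1 : x ∈ Rset q d n) (h2 : x ∈ lineE r dl) : ad d = ad dl := by
  obtain ⟨t, -, rfl⟩ := h1
  obtain ⟨s, hx⟩ := h2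
  rcases seg_eq_cases hdl hd (hx.symm) with ⟨h, -⟩ | ⟨h, -⟩
  · rw [h]
  · rw [h, ad_neg]

lemma legTrace {dl f : V2} (hdl : isDir dl) (hf : isDir f) (r q : V2) (n : ℕ) :
    Rset q f n ∩ lineE r dl = ∅ ∨
    (∃ k a b : ℤ, q = mv r dl k ∧ (a = k ∨ b = k) ∧ a ≤ b ∧
      Rset q f n = segs r dl a b) := by
  by_cases h : (Rset q f n ∩ lineE r dl) = ∅
  · left; exact h
  right
  obtain ⟨x, hx1, hx2⟩ := Set.nonempty_iff_ne_empty.mpr h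
  obtain ⟨t, ht, rfl⟩ := hx1
  obtain ⟨s, hx⟩ := hx2
  rcases seg_eq_cases hdl hf hx.symm with ⟨hfd, hq⟩ | ⟨hfd, hq⟩
  · refine ⟨s - t, s - t, s - t + n, hq, Or.inl rfl, by omega, ?_⟩
    rw [hfd, hq, Rset_eq_segs, segs_rebase]
    congr 1; ring
  · refine ⟨s + t + 1, s + t + 1 - n, s + t + 1, hq, Or.inr rfl, by omega, ?_⟩
    rw [hfd, hq, Rset_eq_segs, segs_rebase_neg]
    congr 1; ring

lemma pathTrace {dl d e : V2} (hdl : isDir dl) (hd : isDir d) (he : isDir e)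
    (hde : ad d ≠ ad e) (r q : V2) (n m : ℕ) :
    ∃ a b : ℤ, a ≤ b ∧ (Rset q d n ∪ Rset q e m) ∩ lineE r dl = segs r dl a b ∧
      (a = b ∨ ∃ (k : ℤ) (f : V2) (l : ℕ), isDir f ∧ ad f ≠ ad dl ∧ q = mv r dl k ∧
        (a = k ∨ b = k) ∧ Rset q d n ∪ Rset q e m = segs r dl a b ∪ Rset q f l ∧
        Rset q f l ∩ lineE r dl = ∅) := by
  have key : ∀ (d' e' : V2), isDir d' → isDir e' → ad d' ≠ ad e' → ∀ (n' m' : ℕ)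
      (k a b : ℤ), q = mv r dl k → (a = k ∨ b = k) → a ≤ b → a < b →
      Rset q d' n' = segs r dl a b →
      ∃ a' b' : ℤ, a' ≤ b' ∧ (Rset q d' n' ∪ Rset q e' m') ∩ lineE r dl = segs r dl a' b' ∧
      (a' = b' ∨ ∃ (k : ℤ) (f : V2) (l : ℕ), isDir f ∧ ad f ≠ ad dl ∧ q = mv r dl k ∧
        (a' = k ∨ b' = k) ∧ Rset q d' n' ∪ Rset q e' m' = segs r dl a' b' ∪ Rset q f l ∧
        Rset q f l ∩ lineE r dl = ∅) := by
    intro d' e' hd' he' hde' n' m' k a b hq hk hab hlt hseg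
    have hadl : ad d' = ad dl := by
      have hmem : seg r dl a ∈ Rset q d' n' := by
        rw [hseg]; exact ⟨a, le_refl a, hlt, rfl⟩
      exact ad_eq_of_on_line hdl hd' hmem (segs_subset_lineE r dl a b ⟨a, le_refl a, hlt, rfl⟩)
    have hedl : ad e' ≠ ad dl := fun hh => hde' (hadl.trans hh.symm)
    have hdisj : Rset q e' m' ∩ lineE r dl = ∅ := by
      have := lineE_disj he' hdl hedl q r
      apply Set.eq_empty_of_subset_empty
      rw [← this]
      exact Set.inter_subset_inter_left _ (Rset_subset_lineE q e' m')
    refine ⟨a, b, hab, ?_, Or.inr ⟨k, e', m', he', hedl, hq, hk, ?_, hdisj⟩⟩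
    · rw [Set.union_inter_distrib_right, hdisj, Set.union_empty, hseg]
      apply Set.inter_eq_self_of_subset_left
      rw [← hseg]; exact (hseg ▸ segs_subset_lineE r dl a b : _)
    · rw [hseg]
  rcases legTrace hdl hd r q n with h1 | ⟨k, a, b, hq, hk, hab, hseg⟩
  · rcases legTrace hdl he r q m with h2 | ⟨k, a, b, hq, hk, hab, hseg⟩
    · refine ⟨0, 0, le_refl 0, ?_, Or.inl rfl⟩
      rw [Set.union_inter_distrib_right, h1, h2, segs_empty (le_refl 0), Set.union_empty]
    · by_cases hlt : a < b
      · obtain ⟨a', b', h1', h2', h3'⟩ :=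
          key e d he hd (fun hh => hde hh.symm) m n k a b hq hk hab hlt hseg
        refine ⟨a', b', h1', ?_, ?_⟩
        · rw [Set.union_comm]; exact h2'
        · rcases h3' with h | ⟨k', f, l, hh⟩
          · exact Or.inl h
          · exact Or.inr ⟨k', f, l, hh.1, hh.2.1, hh.2.2.1, hh.2.2.2.1,
              by rw [Set.union_comm]; exact hh.2.2.2.2.1, hh.2.2.2.2.2⟩
      · have hab' : a = b := by omega
        have h2 : Rset q e m ∩ lineE r dl = ∅ := by
          rw [hseg, hab', segs_empty (le_refl b)]; exact Set.empty_inter _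
        refine ⟨0, 0, le_refl 0, ?_, Or.inl rfl⟩
        rw [Set.union_inter_distrib_right, h1, h2, segs_empty (le_refl 0), Set.union_empty]
  · by_cases hlt : a < b
    · exact key d e hd he hde n m k a b hq hk hab hlt hseg
    · have hab' : a = b := by omega
      have h1 : Rset q d n ∩ lineE r dl = ∅ := by
        rw [hseg, hab', segs_empty (le_refl b)]; exact Set.empty_inter _
      rcases legTrace hdl he r q m with h2 | ⟨k2, a2, b2, hq2, hk2, hab2, hseg2⟩
      · refine ⟨0, 0, le_refl 0, ?_, Or.inl rfl⟩
        rw [Set.union_inter_distrib_right, h1, h2, segs_empty (le_refl 0), Set.union_empty]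
      · by_cases hlt2 : a2 < b2
        · obtain ⟨a', b', h1', h2', h3'⟩ :=
            key e d he hd (fun hh => hde hh.symm) m n k2 a2 b2 hq2 hk2 hab2 hlt2 hseg2
          refine ⟨a', b', h1', ?_, ?_⟩
          · rw [Set.union_comm]; exact h2'
          · rcases h3' with h | ⟨k', f, l, hh⟩
            · exact Or.inl h
            · exact Or.inr ⟨k', f, l, hh.1, hh.2.1, hh.2.2.1, hh.2.2.2.1,
                by rw [Set.union_comm]; exact hh.2.2.2.2.1, hh.2.2.2.2.2⟩
        · have hab2' : a2 = b2 := by omega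
          have h2 : Rset q e m ∩ lineE r dl = ∅ := by
            rw [hseg2, hab2', segs_empty (le_refl b2)]; exact Set.empty_inter _
          refine ⟨0, 0, le_refl 0, ?_, Or.inl rfl⟩
          rw [Set.union_inter_distrib_right, h1, h2, segs_empty (le_refl 0), Set.union_empty]

open SimpleGraph Walk

lemma tgrid_adj {a b : ℤ × ℤ} : TGrid.Adj a b ↔
    ((b.1 - a.1 = 1 ∧ b.2 - a.2 = 0) ∨ (b.1 - a.1 = -1 ∧ b.2 - a.2 = 0) ∨
    (b.1 - a.1 = 0 ∧ b.2 - a.2 = 1) ∨ (b.1 - a.1 = 0 ∧ b.2 - a.2 = -1) ∨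
    (b.1 - a.1 = 1 ∧ b.2 - a.2 = 1) ∨ (b.1 - a.1 = -1 ∧ b.2 - a.2 = -1)) := Iff.rfl

lemma mem_edges_iff {u v : ℤ × ℤ} (w : TGrid.Walk u v) (x : Sym2 (ℤ × ℤ)) :
    x ∈ w.edges ↔ ∃ t, t < w.length ∧ x = s(w.getVert t, w.getVert (t+1)) := by
  induction w with
  | nil => simp
  | @cons a b c h p ih =>
    simp only [SimpleGraph.Walk.edges_cons, List.mem_cons, ih, SimpleGraph.Walk.length_cons]
    constructor
    · rintro (rfl | ⟨t, ht, rfl⟩)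
      · refine ⟨0, by omega, ?_⟩
        rw [SimpleGraph.Walk.getVert_zero]
        rw [show (SimpleGraph.Walk.cons h p).getVert (0+1) = p.getVert 0 from
          SimpleGraph.Walk.getVert_cons_succ p h, SimpleGraph.Walk.getVert_zero]
      · exact ⟨t+1, by omega, by
          rw [SimpleGraph.Walk.getVert_cons_succ, SimpleGraph.Walk.getVert_cons_succ]⟩
    · rintro ⟨t, ht, rfl⟩
      cases t with
      | zero =>
        left
        rw [SimpleGraph.Walk.getVert_zero,
          show (SimpleGraph.Walk.cons h p).getVert (0+1) = p.getVert 0 from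
          SimpleGraph.Walk.getVert_cons_succ p h, SimpleGraph.Walk.getVert_zero]
      | succ t =>
        right
        exact ⟨t, by omega, by
          rw [SimpleGraph.Walk.getVert_cons_succ, SimpleGraph.Walk.getVert_cons_succ]⟩

lemma getVert_inj {u v : ℤ × ℤ} {w : TGrid.Walk u v} (hw : w.IsPath) :
    ∀ i j, i ≤ w.length → j ≤ w.length → w.getVert i = w.getVert j → i = j := by
  induction w with
  | nil => intro i j hi hj _; simp at hi hj; omega
  | @cons a b c h p ih =>
    intro i j hi hj hij
    rw [SimpleGraph.Walk.cons_isPath_iff] at hw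
    simp only [SimpleGraph.Walk.length_cons] at hi hj
    match i, j with
    | 0, 0 => rfl
    | 0, (j+1) =>
      exfalso
      rw [SimpleGraph.Walk.getVert_zero, SimpleGraph.Walk.getVert_cons_succ] at hij
      exact hw.2 (SimpleGraph.Walk.mem_support_iff_exists_getVert.mpr ⟨j, hij.symm, by omega⟩)
    | (i+1), 0 =>
      exfalso
      rw [SimpleGraph.Walk.getVert_zero, SimpleGraph.Walk.getVert_cons_succ] at hij
      exact hw.2 (SimpleGraph.Walk.mem_support_iff_exists_getVert.mpr ⟨i, hij, by omega⟩)
    | (i+1), (j+1) =>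
      rw [SimpleGraph.Walk.getVert_cons_succ, SimpleGraph.Walk.getVert_cons_succ] at hij
      have := ih hw.1 i j (by omega) (by omega) hij
      omega

lemma NF (P : TPath) (hb : bendCount P.walk ≤ 1) :
    ∃ (q d e : V2) (n m : ℕ), isDir d ∧ isDir e ∧ ad d ≠ ad e ∧ 1 ≤ n ∧
      pEdges P = Rset q d n ∪ Rset q e m := by
  obtain ⟨u, v, w, hpath, hlen⟩ := P
  set L := w.length with hL
  -- step function
  set st : ℕ → V2 := fun t =>
    ((w.getVert (t+1)).1 - (w.getVert t).1, (w.getVert (t+1)).2 - (w.getVert t).2) with hst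
  have hstepD : ∀ t, t < L → isDir (st t) := by
    intro t ht
    have := SimpleGraph.Walk.adj_getVert_succ w ht
    rw [tgrid_adj] at this
    simp only [hst, isDir, Prod.mk.injEq]
    omega
  have hstepM : ∀ t : ℕ, w.getVert (t+1) = mv (w.getVert t) (st t) 1 := by
    intro t
    simp only [hst, mv]
    exact Prod.ext (by ring) (by ring)
  have hedir : ∀ t, edir (wEdge w t) = ad (st t) := by
    intro t
    simp only [edir, wEdge, Sym2.lift_mk, ad, hst]
    rw [abs_sub_comm, abs_sub_comm ((w.getVert t).2)]
  have hnb : ∀ t, t + 1 < L → st (t+1) ≠ (-(st t).1, -(st t).2) := by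
    intro t ht heq
    have h2 : w.getVert (t+2) = w.getVert t := by
      have e1 := hstepM t
      have e2 := hstepM (t+1)
      rw [heq] at e2
      simp only [mv] at e1 e2
      rw [show t+2 = t+1+1 from rfl, e2, e1]
      exact Prod.ext (by dsimp; ring) (by dsimp; ring)
    have := getVert_inj hpath (t+2) t (by omega) (by omega) h2
    omega
  have hprop : ∀ t, t + 1 < L → edir (wEdge w t) = edir (wEdge w (t+1)) → st (t+1) = st t := by
    intro t ht he
    rw [hedir, hedir] at he
    rcases ad_cases (hstepD t (by omega)) (hstepD (t+1) ht) he with h | h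
    · exact h
    · exact absurd h (hnb t ht)
  -- bends
  have huniq : ∀ i j, i < L - 1 → j < L - 1 →
      edir (wEdge w i) ≠ edir (wEdge w (i+1)) → edir (wEdge w j) ≠ edir (wEdge w (j+1)) →
      i = j := by
    intro i j hi hj hbi hbj
    by_contra hne
    have hcount : (List.range (L-1)).countP
        (fun i => decide (edir (wEdge w i) ≠ edir (wEdge w (i + 1)))) ≤ 1 := hb
    rw [List.countP_eq_length_filter] at hcount
    set f := (fun i => decide (edir (wEdge w i) ≠ edir (wEdge w (i + 1))))
    have hmemi : i ∈ (List.range (L-1)).filter f :=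
      List.mem_filter.mpr ⟨List.mem_range.mpr hi, by simp [f, hbi]⟩
    have hmemj : j ∈ (List.range (L-1)).filter f :=
      List.mem_filter.mpr ⟨List.mem_range.mpr hj, by simp [f, hbj]⟩
    have h2 : 1 < ((List.range (L-1)).filter f).toFinset.card :=
      Finset.one_lt_card.mpr ⟨i, List.mem_toFinset.mpr hmemi, j, List.mem_toFinset.mpr hmemj, hne⟩
    have h3 := List.toFinset_card_le ((List.range (L-1)).filter f)
    omega
  have hedges : ∀ x, (x ∈ pEdges ⟨u, v, w, hpath, hlen⟩ ↔
      ∃ t, t < L ∧ x = s(w.getVert t, w.getVert (t+1))) := by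
    intro x; exact mem_edges_iff w x
  by_cases hstraight : ∀ i, i < L - 1 → edir (wEdge w i) = edir (wEdge w (i+1))
  · -- straight case
    have hconst : ∀ t, t < L → st t = st 0 := by
      intro t
      induction t with
      | zero => intro _; rfl
      | succ s ih =>
        intro hs
        rw [hprop s hs (hstraight s (by omega)), ih (by omega)]
    have hget : ∀ t, t ≤ L → w.getVert t = mv (w.getVert 0) (st 0) t := by
      intro t
      induction t with
      | zero => intro _; simp [mv_zero]
      | succ s ih =>
        intro hs
        rw [hstepM s, hconst s (by omega), ih (by omega), mv_mv]
        norm_cast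
    set other : V2 := if ad (st 0) = ((1:ℤ),(0:ℤ)) then ((0:ℤ),(1:ℤ)) else ((1:ℤ),(0:ℤ))
      with hother
    refine ⟨w.getVert 0, st 0, other, L, 0, hstepD 0 (by omega), ?_, ?_, by omega, ?_⟩
    · rw [hother]; split <;> simp [isDir]
    · rw [hother]; split
      · next hsp => rw [hsp]; decide
      · next hsp => intro hcon; exact hsp (by rw [hcon]; rfl)
    · ext x
      rw [hedges x]
      constructor
      · rintro ⟨t, ht, rfl⟩
        left
        refine ⟨t, ht, ?_⟩
        rw [seg, hget t (by omega), hget (t+1) (by omega)]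
        norm_cast
      · rintro (⟨t, ht, rfl⟩ | ⟨t, ht, rfl⟩)
        · refine ⟨t, ht, ?_⟩
          rw [seg, hget t (by omega), hget (t+1) (by omega)]
          norm_cast
        · omega
  · -- bent case
    push_neg at hstraight
    obtain ⟨mb, hmb, hbnd⟩ := hstraight
    have honly : ∀ i, i < L - 1 → i ≠ mb → edir (wEdge w i) = edir (wEdge w (i+1)) := by
      intro i hi hne
      by_contra hcon
      exact hne (huniq i mb hi hmb hcon hbnd)
    have hconst1 : ∀ t, t ≤ mb → st t = st 0 := by
      intro t
      induction t with
      | zero => intro _; rfl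
      | succ s ih =>
        intro hs
        rw [hprop s (by omega) (honly s (by omega) (by omega)), ih (by omega)]
    have hconst2 : ∀ t, mb + 1 ≤ t → t < L → st t = st (mb+1) := by
      intro t
      induction t with
      | zero => omega
      | succ s ih =>
        intro hs1 hs2
        rcases Nat.eq_or_lt_of_le hs1 with h | h
        · rw [← h]
        · rw [hprop s (by omega) (honly s (by omega) (by omega)), ih (by omega) (by omega)]
    set p := w.getVert (mb+1) with hp
    set d1 := st 0 with hd1
    set d2 := st (mb+1) with hd2
    set nd : V2 := (-d1.1, -d1.2) with hnd
    have hback : ∀ s, s ≤ mb + 1 → w.getVert (mb + 1 - s) = mv p nd s := by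
      intro s
      induction s with
      | zero => intro _; simp [mv_zero, hp]
      | succ s ih =>
        intro hs
        have e1 := hstepM (mb - s)
        rw [hconst1 (mb - s) (by omega)] at e1
        have heq : mb - s + 1 = mb + 1 - s := by omega
        rw [heq] at e1
        have : w.getVert (mb - s) = mv (w.getVert (mb + 1 - s)) nd 1 := by
          rw [e1]
          simp only [mv, hnd]
          exact Prod.ext (by dsimp; ring) (by dsimp; ring)
        rw [show mb + 1 - (s+1) = mb - s from by omega, this, ih (by omega), mv_mv]
        norm_cast
    have hfwd : ∀ s, mb + 1 + s ≤ L → w.getVert (mb + 1 + s) = mv p d2 s := by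
      intro s
      induction s with
      | zero => intro _; simp [mv_zero, hp]
      | succ s ih =>
        intro hs
        rw [show mb + 1 + (s+1) = (mb + 1 + s) + 1 from by omega, hstepM,
          hconst2 (mb+1+s) (by omega) (by omega), ih (by omega), mv_mv]
        norm_cast
    have hDd1 : isDir d1 := hstepD 0 (by omega)
    have hDd2 : isDir d2 := hstepD (mb+1) (by omega)
    have hDnd : isDir nd := by
      rcases hDd1 with h|h|h|h|h|h <;> rw [hnd, h] <;> simp [isDir]
    have hadne : ad nd ≠ ad d2 := by
      have := hbnd
      rw [hedir, hedir] at this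
      rw [hconst1 mb (by omega)] at this
      rw [hnd, ad_neg]
      exact this
    refine ⟨p, nd, d2, mb + 1, L - (mb + 1), hDnd, hDd2, hadne, by omega, ?_⟩
    ext x
    rw [hedges x]
    constructor
    · rintro ⟨t, ht, rfl⟩
      by_cases hcase : t ≤ mb
      · left
        refine ⟨mb - t, by omega, ?_⟩
        have e1 : w.getVert t = mv p nd ((mb - t + 1 : ℕ) : ℤ) := by
          have h := hback (mb - t + 1) (by omega)
          rwa [show mb + 1 - (mb - t + 1) = t from by omega] at h
        have e2 : w.getVert (t+1) = mv p nd ((mb - t : ℕ) : ℤ) := by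
          have h := hback (mb - t) (by omega)
          rwa [show mb + 1 - (mb - t) = t + 1 from by omega] at h
        rw [seg, e1, e2, Sym2.eq_swap]
        norm_cast
      · right
        refine ⟨t - (mb + 1), by omega, ?_⟩
        have e1 : w.getVert t = mv p d2 ((t - (mb+1) : ℕ) : ℤ) := by
          have h := hfwd (t - (mb+1)) (by omega)
          rwa [show mb + 1 + (t - (mb+1)) = t from by omega] at h
        have e2 : w.getVert (t+1) = mv p d2 ((t - (mb+1) + 1 : ℕ) : ℤ) := by
          have h := hfwd (t - (mb+1) + 1) (by omega)
          rwa [show mb + 1 + (t - (mb+1) + 1) = t + 1 from by omega] at h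
        rw [seg, e1, e2]
        norm_cast
    · rintro (⟨s, hs, rfl⟩ | ⟨s, hs, rfl⟩)
      · refine ⟨mb - s, by omega, ?_⟩
        have e1 : w.getVert (mb - s) = mv p nd ((s + 1 : ℕ) : ℤ) := by
          have h := hback (s+1) (by omega)
          rwa [show mb + 1 - (s + 1) = mb - s from by omega] at h
        have e2 : w.getVert ((mb - s) + 1) = mv p nd ((s : ℕ) : ℤ) := by
          have h := hback s (by omega)
          rwa [show mb + 1 - s = mb - s + 1 from by omega] at h
        rw [seg, e1, e2, Sym2.eq_swap]
        norm_cast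
      · refine ⟨mb + 1 + s, by omega, ?_⟩
        have e1 := hfwd s (by omega)
        have e2 : w.getVert ((mb + 1 + s) + 1) = mv p d2 ((s + 1 : ℕ) : ℤ) := by
          have h := hfwd (s+1) (by omega)
          rwa [show mb + 1 + (s + 1) = mb + 1 + s + 1 from by omega] at h
        rw [seg, e1, e2]
        norm_cast

lemma pad {ι : Type} [Fintype ι] (hcard : 3 ≤ Fintype.card ι) (P : ι → TPath)
    (u v c : ι)
    (h : pEdges (P u) ∩ pEdges (P v) ∩ pEdges (P c) ⊆ ⋂ i, pEdges (P i)) :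
    ∃ a b c : ι, a ≠ b ∧ b ≠ c ∧ a ≠ c ∧
      pEdges (P a) ∩ pEdges (P b) ∩ pEdges (P c) = ⋂ i, pEdges (P i) := by
  classical
  have h3 : ({u, v, c} : Finset ι).card ≤ 3 := by
    refine le_trans (Finset.card_insert_le _ _) ?_
    refine Nat.succ_le_succ (le_trans (Finset.card_insert_le _ _) ?_)
    simp
  obtain ⟨T, hsub, -, hcardT⟩ := Finset.exists_subsuperset_card_eq
    (Finset.subset_univ ({u, v, c} : Finset ι)) h3 (by rw [Finset.card_univ]; exact hcard)
  obtain ⟨a, b, c', hab, hac, hbc, rfl⟩ := Finset.card_eq_three.mp hcardT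
  refine ⟨a, b, c', hab, hbc, hac, Set.Subset.antisymm ?_ ?_⟩
  · intro x hx
    apply h
    have hin : ∀ j ∈ ({a, b, c'} : Finset ι), x ∈ pEdges (P j) := by
      intro j hj
      simp only [Finset.mem_insert, Finset.mem_singleton] at hj
      rcases hj with rfl | rfl | rfl
      exacts [hx.1.1, hx.1.2, hx.2]
    exact ⟨⟨hin u (hsub (by simp)), hin v (hsub (by simp))⟩, hin c (hsub (by simp))⟩
  · intro x hx
    have hall := fun i => Set.mem_iInter.mp hx i
    exact ⟨⟨hall a, hall b⟩, hall c'⟩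

lemma core {ι : Type} [Fintype ι] [Nonempty ι] (hcard : 3 ≤ Fintype.card ι)
    (P : ι → TPath) (q dd ee : ι → V2) (nn mm : ι → ℕ)
    (hd : ∀ i, isDir (dd i)) (he : ∀ i, isDir (ee i)) (hde : ∀ i, ad (dd i) ≠ ad (ee i))
    (hE : ∀ i, pEdges (P i) = Rset (q i) (dd i) (nn i) ∪ Rset (q i) (ee i) (mm i))
    (r dl : V2) (hdl : isDir dl)
    (h2 : (⋂ i, pEdges (P i)) ⊆ lineE r dl)
    (h1 : ∀ j, (pEdges (P j) ∩ lineE r dl).Nonempty) :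
    ∃ a b c : ι, a ≠ b ∧ b ≠ c ∧ a ≠ c ∧
      pEdges (P a) ∩ pEdges (P b) ∩ pEdges (P c) = ⋂ i, pEdges (P i) := by
  classical
  have tr : ∀ j, ∃ (a b k : ℤ) (f : V2) (l : ℕ), a < b ∧
      pEdges (P j) ∩ lineE r dl = segs r dl a b ∧ isDir f ∧ ad f ≠ ad dl ∧
      q j = mv r dl k ∧ (a = k ∨ b = k) ∧
      pEdges (P j) = segs r dl a b ∪ Rset (q j) f l ∧
      Rset (q j) f l ∩ lineE r dl = ∅ := by
    intro j
    obtain ⟨a, b, hab, htr, hrest⟩ :=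
      pathTrace hdl (hd j) (he j) (hde j) r (q j) (nn j) (mm j)
    rw [← hE j] at htr hrest
    obtain ⟨x, hx⟩ := h1 j
    rw [htr] at hx
    obtain ⟨s, hs1, hs2, -⟩ := hx
    have hlt : a < b := by omega
    rcases hrest with heq | ⟨k, f, l, hDf, hfdl, hq, hk, hdecomp, hlegdisj⟩
    · omega
    · exact ⟨a, b, k, f, l, hlt, htr, hDf, hfdl, hq, hk, hdecomp, hlegdisj⟩
  choose a b k f l hlt htr hDf hfdl hq hk hdecomp hlegdisj using tr
  have hXeq : (⋂ i, pEdges (P i)) = ⋂ j, segs r dl (a j) (b j) := by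
    have e0 : (⋂ i, pEdges (P i)) ∩ lineE r dl = ⋂ i, pEdges (P i) :=
      Set.inter_eq_self_of_subset_left h2
    rw [← e0, Set.iInter_inter]
    exact Set.iInter_congr htr
  obtain ⟨u, -, hu⟩ := Finset.exists_max_image Finset.univ a ⟨Classical.arbitrary ι, by simp⟩
  obtain ⟨v, -, hv⟩ := Finset.exists_min_image Finset.univ b ⟨Classical.arbitrary ι, by simp⟩
  have hseguv : segs r dl (a u) (b v) = ⋂ i, pEdges (P i) := by
    apply Set.Subset.antisymm
    · rintro x ⟨s, hs1, hs2, rfl⟩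
      rw [hXeq]
      apply Set.mem_iInter.mpr
      intro j
      exact ⟨s, le_trans (hu j (by simp)) hs1, lt_of_lt_of_le hs2 (hv j (by simp)), rfl⟩
    · rw [hXeq]
      intro x hx
      obtain ⟨s, hs1, -, rfl⟩ := Set.mem_iInter.mp hx u
      obtain ⟨s', -, hs2, hxx⟩ := Set.mem_iInter.mp hx v
      have := seg_inj hdl hxx
      exact ⟨s, hs1, by omega, rfl⟩
  have hUV : pEdges (P u) ∩ pEdges (P v) ⊆ (⋂ i, pEdges (P i)) ∪
      (Rset (q u) (f u) (l u) ∩ Rset (q v) (f v) (l v)) := by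
    rintro x ⟨hxu, hxv⟩
    rw [hdecomp u] at hxu; rw [hdecomp v] at hxv
    rcases hxu with h1' | h1' <;> rcases hxv with h2' | h2'
    · left
      rw [← hseguv]
      obtain ⟨s, hs1, hs2, rfl⟩ := h1'
      obtain ⟨s', hs1', hs2', hxx⟩ := h2'
      have := seg_inj hdl hxx
      exact ⟨s, hs1, by omega, rfl⟩
    · exfalso
      have : x ∈ Rset (q v) (f v) (l v) ∩ lineE r dl :=
        ⟨h2', segs_subset_lineE r dl _ _ h1'⟩
      rw [hlegdisj v] at this
      exact this
    · exfalso
      have : x ∈ Rset (q u) (f u) (l u) ∩ lineE r dl :=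
        ⟨h1', segs_subset_lineE r dl _ _ h2'⟩
      rw [hlegdisj u] at this
      exact this
    · exact Or.inr ⟨h1', h2'⟩
  by_cases hY : (Rset (q u) (f u) (l u) ∩ Rset (q v) (f v) (l v)) = ∅
  · apply pad hcard P u v v
    intro x hx
    rcases hUV ⟨hx.1.1, hx.1.2⟩ with h | h
    · exact h
    · rw [hY] at h; exact absurd h (Set.notMem_empty x)
  · obtain ⟨y, hyu, hyv⟩ := Set.nonempty_iff_ne_empty.mpr hY
    obtain ⟨t, ht, rfl⟩ := hyu
    obtain ⟨t', ht', hy2⟩ := hyv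
    have hqvu : q v = q u := by
      have hcases := seg_eq_cases (hDf u) (hDf v) hy2
      have hz : ∃ z : ℤ, q v = mv (q u) (f u) z := by
        rcases hcases with ⟨-, hh⟩ | ⟨-, hh⟩
        · exact ⟨t - t', hh⟩
        · exact ⟨t + t' + 1, hh⟩
      obtain ⟨z, hz⟩ := hz
      rw [hq u, hq v] at hz
      have e1 := congrArg Prod.fst hz
      have e2 := congrArg Prod.snd hz
      simp only [mv] at e1 e2
      have e1' : (k v - k u) * dl.1 = z * (f u).1 := by ring_nf; ring_nf at e1; linarith
      have e2' : (k v - k u) * dl.2 = z * (f u).2 := by ring_nf; ring_nf at e2; linarith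
      obtain ⟨hz1, hz2⟩ := lemmaD hdl (hDf u) (fun hh => (hfdl u) hh.symm) e1' e2'
      rw [hq u, hq v]
      congr 1
      omega
    have hline13 : lineE r dl ∩ lineE (q u) (f u) = ∅ :=
      lineE_disj hdl (hDf u) (fun hh => (hfdl u) hh.symm) r (q u)
    have hX3 : (⋂ i, pEdges (P i)) ∩ lineE (q u) (f u) = ∅ := by
      apply Set.eq_empty_of_subset_empty
      rw [← hline13]
      exact Set.inter_subset_inter_left _ h2
    by_cases hc : ∃ c, pEdges (P c) ∩ lineE (q u) (f u) = ∅
    · obtain ⟨c, hc⟩ := hc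
      apply pad hcard P u v c
      intro x hx
      rcases hUV ⟨hx.1.1, hx.1.2⟩ with h | h
      · exact h
      · exfalso
        have : x ∈ pEdges (P c) ∩ lineE (q u) (f u) :=
          ⟨hx.2, Rset_subset_lineE _ _ _ h.1⟩
        rw [hc] at this
        exact this
    · push_neg at hc
      have tr3 : ∀ j, ∃ a3 b3 : ℤ, a3 < b3 ∧ (a3 = 0 ∨ b3 = 0) ∧
          pEdges (P j) ∩ lineE (q u) (f u) = segs (q u) (f u) a3 b3 := by
        intro j
        obtain ⟨a3, b3, hab3, htr3, hrest3⟩ :=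
          pathTrace (hDf u) (hd j) (he j) (hde j) (q u) (q j) (nn j) (mm j)
        rw [← hE j] at htr3 hrest3
        obtain ⟨x, hx⟩ := hc j
        rw [htr3] at hx
        obtain ⟨s, hs1, hs2, -⟩ := hx
        have hlt3 : a3 < b3 := by omega
        rcases hrest3 with heq | ⟨k3, f3, l3, -, -, hq3, hk3, -, -⟩
        · omega
        · refine ⟨a3, b3, hlt3, ?_, htr3⟩
          have hk30 : k3 = 0 := by
            have hz : mv r dl (k j) = mv (mv r dl (k u)) (f u) k3 := by
              rw [← hq u, ← hq j]; exact hq3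
            have e1 := congrArg Prod.fst hz
            have e2 := congrArg Prod.snd hz
            simp only [mv] at e1 e2
            have e1' : (k j - k u) * dl.1 = k3 * (f u).1 := by ring_nf; ring_nf at e1; linarith
            have e2' : (k j - k u) * dl.2 = k3 * (f u).2 := by ring_nf; ring_nf at e2; linarith
            exact (lemmaD hdl (hDf u) (fun hh => (hfdl u) hh.symm) e1' e2').2
          omega
      choose a3 b3 hlt3 hanch3 htr3 using tr3
      have hmem3 : ∀ (j : ι) (s : ℤ), a3 j ≤ s → s < b3 j → seg (q u) (f u) s ∈ pEdges (P j) := by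
        intro j s hs1 hs2
        have : seg (q u) (f u) s ∈ segs (q u) (f u) (a3 j) (b3 j) := ⟨s, hs1, hs2, rfl⟩
        rw [← htr3 j] at this
        exact this.1
      have hnotall : ∀ s : ℤ, ¬ ∀ j, a3 j ≤ s ∧ s < b3 j := by
        intro s hall
        have hmm : seg (q u) (f u) s ∈ (⋂ i, pEdges (P i)) ∩ lineE (q u) (f u) :=
          ⟨Set.mem_iInter.mpr fun j => hmem3 j s (hall j).1 (hall j).2, ⟨s, rfl⟩⟩
        rw [hX3] at hmm
        exact hmm
      have hjneg : ∃ jn, b3 jn = 0 := by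
        by_contra hno
        push_neg at hno
        apply hnotall 0
        intro j
        rcases hanch3 j with h0 | h0
        · have := hlt3 j; constructor <;> omega
        · exact absurd h0 (hno j)
      have hjpos : ∃ jp, a3 jp = 0 := by
        by_contra hno
        push_neg at hno
        apply hnotall (-1)
        intro j
        rcases hanch3 j with h0 | h0
        · exact absurd h0 (hno j)
        · have := hlt3 j; constructor <;> omega
      -- the common leg element y = seg (q u) (f u) t lies in trace3 u
      have hyu3 : a3 u ≤ t ∧ (t : ℤ) < b3 u := by
        have hxu : seg (q u) (f u) t ∈ pEdges (P u) :=
          (hdecomp u) ▸ Or.inr ⟨t, ht, rfl⟩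
        have : seg (q u) (f u) t ∈ segs (q u) (f u) (a3 u) (b3 u) := by
          rw [← htr3 u]; exact ⟨hxu, ⟨t, rfl⟩⟩
        obtain ⟨s, hs1, hs2, hxx⟩ := this
        have := seg_inj (hDf u) hxx
        omega
      by_cases hside : 0 ≤ (t : ℤ)
      · obtain ⟨c, hcb⟩ := hjneg
        apply pad hcard P u v c
        intro x hx
        rcases hUV ⟨hx.1.1, hx.1.2⟩ with h | h
        · exact h
        · exfalso
          obtain ⟨t2, ht2, rfl⟩ := h.1
          have hxc : seg (q u) (f u) t2 ∈ segs (q u) (f u) (a3 c) (b3 c) := by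
            rw [← htr3 c]; exact ⟨hx.2, ⟨t2, rfl⟩⟩
          obtain ⟨s, hs1, hs2, hxx⟩ := hxc
          have hst2 := seg_inj (hDf u) hxx
          have hxu3 : seg (q u) (f u) t2 ∈ segs (q u) (f u) (a3 u) (b3 u) := by
            rw [← htr3 u]
            exact ⟨(hdecomp u) ▸ Or.inr ⟨t2, ht2, rfl⟩, ⟨t2, rfl⟩⟩
          obtain ⟨s', hs1', hs2', hxx'⟩ := hxu3
          have hst2' := seg_inj (hDf u) hxx'
          -- sides: b3 u > t ≥ 0 so a3 u = 0; but t2 < b3 c = 0 means s < 0,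
          -- while a3 u = 0 ≤ t2
          rcases hanch3 u with h0 | h0 <;> omega
      · obtain ⟨c, hca⟩ := hjpos
        apply pad hcard P u v c
        intro x hx
        rcases hUV ⟨hx.1.1, hx.1.2⟩ with h | h
        · exact h
        · exfalso
          obtain ⟨t2, ht2, rfl⟩ := h.1
          have hxc : seg (q u) (f u) t2 ∈ segs (q u) (f u) (a3 c) (b3 c) := by
            rw [← htr3 c]; exact ⟨hx.2, ⟨t2, rfl⟩⟩
          obtain ⟨s, hs1, hs2, hxx⟩ := hxc
          have hst2 := seg_inj (hDf u) hxx
          have hxu3 : seg (q u) (f u) t2 ∈ segs (q u) (f u) (a3 u) (b3 u) := by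
            rw [← htr3 u]
            exact ⟨(hdecomp u) ▸ Or.inr ⟨t2, ht2, rfl⟩, ⟨t2, rfl⟩⟩
          obtain ⟨s', hs1', hs2', hxx'⟩ := hxu3
          have hst2' := seg_inj (hDf u) hxx'
          rcases hanch3 u with h0 | h0 <;> omega

lemma caseA {ι : Type} [Fintype ι] [Nonempty ι] (hcard : 3 ≤ Fintype.card ι)
    (P : ι → TPath) (q dd ee : ι → V2) (nn mm : ι → ℕ)
    (hd : ∀ i, isDir (dd i)) (he : ∀ i, isDir (ee i)) (hde : ∀ i, ad (dd i) ≠ ad (ee i))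
    (hE : ∀ i, pEdges (P i) = Rset (q i) (dd i) (nn i) ∪ Rset (q i) (ee i) (mm i))
    (q0 d0 e0 : V2) (hd0 : isDir d0) (he0 : isDir e0) (hde0 : ad d0 ≠ ad e0)
    (hx1 : ((⋂ i, pEdges (P i)) ∩ lineE q0 d0).Nonempty)
    (hx2 : ((⋂ i, pEdges (P i)) ∩ lineE q0 e0).Nonempty) :
    ∃ a b c : ι, a ≠ b ∧ b ≠ c ∧ a ≠ c ∧
      pEdges (P a) ∩ pEdges (P b) ∩ pEdges (P c) = ⋂ i, pEdges (P i) := by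
  classical
  have key : ∀ (δ ε : V2), isDir δ → isDir ε → ad δ ≠ ad ε →
      ((⋂ i, pEdges (P i)) ∩ lineE q0 δ).Nonempty →
      ((⋂ i, pEdges (P i)) ∩ lineE q0 ε).Nonempty →
      ∃ u, (pEdges (P u) ∩ lineE q0 δ) ⊆ (⋂ i, pEdges (P i)) ∧
        pEdges (P u) ⊆ (pEdges (P u) ∩ lineE q0 δ) ∪ lineE q0 ε := by
    intro δ ε hδ hε hδε hy1 hy2
    obtain ⟨x1, hx1X, hx1l⟩ := hy1
    obtain ⟨x2, hx2X, hx2l⟩ := hy2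
    have tr : ∀ j, ∃ (a b k : ℤ) (f : V2) (l : ℕ), a < b ∧
        pEdges (P j) ∩ lineE q0 δ = segs q0 δ a b ∧ isDir f ∧ ad f ≠ ad δ ∧
        q j = mv q0 δ k ∧ (a = k ∨ b = k) ∧
        pEdges (P j) = segs q0 δ a b ∪ Rset (q j) f l ∧
        Rset (q j) f l ∩ lineE q0 δ = ∅ := by
      intro j
      obtain ⟨a, b, hab, htr, hrest⟩ :=
        pathTrace hδ (hd j) (he j) (hde j) q0 (q j) (nn j) (mm j)
      rw [← hE j] at htr hrest
      have hx1j : x1 ∈ segs q0 δ a b := by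
        rw [← htr]; exact ⟨Set.mem_iInter.mp hx1X j, hx1l⟩
      obtain ⟨s, hs1, hs2, -⟩ := hx1j
      rcases hrest with heq | ⟨k, f, l, h1, h2, h3, h4, h5, h6⟩
      · omega
      · exact ⟨a, b, k, f, l, by omega, htr, h1, h2, h3, h4, h5, h6⟩
    choose a b k f l hlt htr hDf hfdl hq hk hdecomp hlegdisj using tr
    have tr2anchor : ∀ j, ∃ k2 : ℤ, q j = mv q0 ε k2 := by
      intro j
      obtain ⟨a2, b2, hab2, htr2, hrest2⟩ :=
        pathTrace hε (hd j) (he j) (hde j) q0 (q j) (nn j) (mm j)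
      rw [← hE j] at htr2 hrest2
      have hx2j : x2 ∈ segs q0 ε a2 b2 := by
        rw [← htr2]; exact ⟨Set.mem_iInter.mp hx2X j, hx2l⟩
      obtain ⟨s, hs1, hs2, -⟩ := hx2j
      rcases hrest2 with heq | ⟨k2, f2, l2, -, -, hq2, -, -, -⟩
      · omega
      · exact ⟨k2, hq2⟩
    have hk0 : ∀ j, k j = 0 := by
      intro j
      obtain ⟨k2, hq2⟩ := tr2anchor j
      have hz : mv q0 δ (k j) = mv q0 ε k2 := by rw [← hq j]; exact hq2
      have e1 := congrArg Prod.fst hz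
      have e2 := congrArg Prod.snd hz
      simp only [mv] at e1 e2
      exact (lemmaD hδ hε hδε (k := k j) (k' := k2) (by linarith) (by linarith)).1
    obtain ⟨s1, hs1eq⟩ := hx1l
    have hbnd : ∀ j, a j ≤ s1 ∧ s1 < b j := by
      intro j
      have hx1j : x1 ∈ segs q0 δ (a j) (b j) := by
        rw [← htr j]; exact ⟨Set.mem_iInter.mp hx1X j, ⟨s1, hs1eq⟩⟩
      obtain ⟨s, h1, h2, hxx⟩ := hx1j
      rw [hs1eq] at hxx
      have := seg_inj hδ hxx
      omega
    have hex : ∃ u, ∀ j, segs q0 δ (a u) (b u) ⊆ segs q0 δ (a j) (b j) := by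
      by_cases hside : 0 ≤ s1
      · have hall0 : ∀ j, a j = 0 := by
          intro j
          have h1 := hbnd j
          rcases hk j with h | h
          · rw [h, hk0 j]
          · exfalso; rw [hk0 j] at h; omega
        obtain ⟨u, -, hu⟩ :=
          Finset.exists_min_image Finset.univ b ⟨Classical.arbitrary ι, by simp⟩
        refine ⟨u, fun j => segs_subset ?_ (hu j (by simp))⟩
        rw [hall0 j, hall0 u]
      · have hall0 : ∀ j, b j = 0 := by
          intro j
          have h1 := hbnd j
          rcases hk j with h | h
          · exfalso; rw [hk0 j] at h; omega
          · rw [h, hk0 j]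
        obtain ⟨u, -, hu⟩ :=
          Finset.exists_max_image Finset.univ a ⟨Classical.arbitrary ι, by simp⟩
        refine ⟨u, fun j => segs_subset (hu j (by simp)) ?_⟩
        rw [hall0 j, hall0 u]
    obtain ⟨u, humin⟩ := hex
    refine ⟨u, ?_, ?_⟩
    · rw [htr u]
      intro x hx
      apply Set.mem_iInter.mpr
      intro j
      have hxj : x ∈ segs q0 δ (a j) (b j) := humin j hx
      rw [← htr j] at hxj
      exact hxj.1
    · rw [htr u, hdecomp u]
      apply Set.union_subset_union_right
      have hx2u : x2 ∈ pEdges (P u) := Set.mem_iInter.mp hx2X u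
      rw [hdecomp u] at hx2u
      have hx2leg : x2 ∈ Rset (q u) (f u) (l u) := by
        rcases hx2u with h | h
        · exfalso
          have hmm : x2 ∈ lineE q0 δ ∩ lineE q0 ε := ⟨segs_subset_lineE _ _ _ _ h, hx2l⟩
          rw [lineE_disj hδ hε hδε q0 q0] at hmm
          exact hmm
        · exact h
      rcases legTrace hε (hDf u) q0 (q u) (l u) with hdis | ⟨k', a', b', -, -, -, hseg'⟩
      · exfalso
        have hmm : x2 ∈ Rset (q u) (f u) (l u) ∩ lineE q0 ε := ⟨hx2leg, hx2l⟩
        rw [hdis] at hmm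
        exact hmm
      · rw [hseg']
        exact segs_subset_lineE q0 ε a' b'
  obtain ⟨u, hu1, hu2⟩ := key d0 e0 hd0 he0 hde0 hx1 hx2
  obtain ⟨v, hv1, hv2⟩ := key e0 d0 he0 hd0 (fun h => hde0 h.symm) hx2 hx1
  apply pad hcard P u v v
  intro x hx
  rcases hu2 hx.1.1 with h | h
  · exact hu1 h
  · exact hv1 ⟨hx.1.2, h⟩

/-- Families of B₁-paths on the triangular grid are strong 3-Helly:
any finite family of at least three at-most-one-bend paths contains three members
whose common edge intersection equals the intersection of the whole family. -/
theorem stmt9 {ι : Type} [Fintype ι]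
    (hcard : 3 ≤ Fintype.card ι)
    (P : ι → TPath) (hbend : ∀ i, bendCount (P i).walk ≤ 1) :
    ∃ a b c : ι, a ≠ b ∧ b ≠ c ∧ a ≠ c ∧
      pEdges (P a) ∩ pEdges (P b) ∩ pEdges (P c) = ⋂ i : ι, pEdges (P i) := by
  classical
  haveI hne : Nonempty ι := by
    have h0 : 0 < Fintype.card ι := by omega
    exact Fintype.card_pos_iff.mp h0
  choose q dd ee nn mm hd he hde hn hE using fun i => NF (P i) (hbend i)
  have i0 : ι := Classical.arbitrary ι
  have hXsub : (⋂ i, pEdges (P i)) ⊆ lineE (q i0) (dd i0) ∪ lineE (q i0) (ee i0) := by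
    intro x hx
    have hx0 := Set.mem_iInter.mp hx i0
    rw [hE i0] at hx0
    rcases hx0 with h | h
    · exact Or.inl (Rset_subset_lineE _ _ _ h)
    · exact Or.inr (Rset_subset_lineE _ _ _ h)
  by_cases htr1 : ∀ j, (pEdges (P j) ∩ lineE (q i0) (dd i0)).Nonempty
  · by_cases hI2 : ((⋂ i, pEdges (P i)) ∩ lineE (q i0) (ee i0)).Nonempty
    · by_cases hI1 : ((⋂ i, pEdges (P i)) ∩ lineE (q i0) (dd i0)).Nonempty
      · exact caseA hcard P q dd ee nn mm hd he hde hE (q i0) (dd i0) (ee i0)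
          (hd i0) (he i0) (hde i0) hI1 hI2
      · have hI1' := Set.not_nonempty_iff_eq_empty.mp hI1
        obtain ⟨x2, hx2X, hx2l⟩ := hI2
        refine core hcard P q dd ee nn mm hd he hde hE (q i0) (ee i0) (he i0) ?_ ?_
        · intro x hx
          rcases hXsub hx with h | h
          · exfalso
            have hmm : x ∈ (⋂ i, pEdges (P i)) ∩ lineE (q i0) (dd i0) := ⟨hx, h⟩
            rw [hI1'] at hmm
            exact hmm
          · exact h
        · intro j
          exact ⟨x2, Set.mem_iInter.mp hx2X j, hx2l⟩
    · have hI2' := Set.not_nonempty_iff_eq_empty.mp hI2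
      refine core hcard P q dd ee nn mm hd he hde hE (q i0) (dd i0) (hd i0) ?_ htr1
      intro x hx
      rcases hXsub hx with h | h
      · exact h
      · exfalso
        have hmm : x ∈ (⋂ i, pEdges (P i)) ∩ lineE (q i0) (ee i0) := ⟨hx, h⟩
        rw [hI2'] at hmm
        exact hmm
  · push_neg at htr1
    obtain ⟨j1, hj1'⟩ := htr1
    by_cases htr2 : ∀ j, (pEdges (P j) ∩ lineE (q i0) (ee i0)).Nonempty
    · refine core hcard P q dd ee nn mm hd he hde hE (q i0) (ee i0) (he i0) ?_ htr2
      intro x hx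
      rcases hXsub hx with h | h
      · exfalso
        have hmm : x ∈ pEdges (P j1) ∩ lineE (q i0) (dd i0) :=
          ⟨Set.mem_iInter.mp hx j1, h⟩
        rw [hj1'] at hmm
        exact hmm
      · exact h
    · push_neg at htr2
      obtain ⟨j2, hj2'⟩ := htr2
      apply pad hcard P i0 j1 j2
      intro x hx
      exfalso
      have hx0 := hx.1.1
      rw [hE i0] at hx0
      rcases hx0 with h | h
      · have hmm : x ∈ pEdges (P j1) ∩ lineE (q i0) (dd i0) :=
          ⟨hx.1.2, Rset_subset_lineE _ _ _ h⟩
        rw [hj1'] at hmm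
        exact hmm
      · have hmm : x ∈ pEdges (P j2) ∩ lineE (q i0) (ee i0) :=
          ⟨hx.2, Rset_subset_lineE _ _ _ h⟩
        rw [hj2'] at hmm
        exact hmm
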